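/- Let G = ({1,...,n}, E) be a connected undirected graph in which every node is its own neighbor, let U ≥ n, and consider the accelerated consensus iteration y_i(t+1) = x_i(t) + ∑_{j ∈ N(i), j ≠ i} (x_j(t) − x_i(t)) / (2 max(d(i), d(j))), x_i(t+1) = y_i(t+1) + (1 − 2/(9U+1))·(y_i(t+1) − y_i(t)), initialized with y(0) = x(0). Then for every ε ∈ (0,1) and every integer t ≥ 9U · ln(18/ε), one has E(t) ≤ ε · E(0), where E(t) = ||x(t) − x̄ 1||₂². -/

import Mathlib

-- ===== Part1.lean =====

noncomputable section
open Finset Real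

lemma cos_two_step (θ A : ℝ) :
    Real.cos (A + 2*θ) = 2*Real.cos θ * Real.cos (A + θ) - Real.cos A := by
  have e1 := Real.cos_add (A+θ) θ
  have e2 := Real.cos_sub (A+θ) θ
  rw [show (A+θ)+θ = A+2*θ by ring] at e1
  rw [show (A+θ)-θ = A by ring] at e2
  linear_combination e1 + e2

lemma sin_two_step (θ A : ℝ) :
    Real.sin (A + 2*θ) = 2*Real.cos θ * Real.sin (A + θ) - Real.sin A := by
  have e1 := Real.sin_add (A+θ) θ
  have e2 := Real.sin_sub (A+θ) θ
  rw [show (A+θ)+θ = A+2*θ by ring] at e1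
  rw [show (A+θ)-θ = A by ring] at e2
  linear_combination e1 + e2

set_option maxHeartbeats 1000000 in
lemma closed_form_bound (β μ : ℝ) (hβ : 0 < β) (hμ : 0 < μ)
    (h4 : (1+β)^2*μ < 4*β) (u : ℕ → ℝ)
    (h1 : u 1 = ((1+β)*μ - β) * u 0)
    (hrec : ∀ t, u (t+2) = (1+β)*μ*u (t+1) - β*μ*u t) :
    ∀ t : ℕ, u t ^ 2 ≤ (β*μ)^t *
      (1 + ((1+β)*μ/2 - β)^2 / (β*μ - (1+β)^2*μ^2/4)) * u 0^2 := by
  have hsβ : 0 < Real.sqrt β := Real.sqrt_pos.2 hβ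
  have hsμ : 0 < Real.sqrt μ := Real.sqrt_pos.2 hμ
  have hββ : Real.sqrt β ^2 = β := Real.sq_sqrt hβ.le
  have hμμ : Real.sqrt μ ^2 = μ := Real.sq_sqrt hμ.le
  set c : ℝ := (1+β)*Real.sqrt μ/(2*Real.sqrt β) with hcdef
  have hc0 : 0 ≤ c := by positivity
  have hc2 : c^2 = (1+β)^2*μ/(4*β) := by
    rw [hcdef, div_pow, mul_pow]
    rw [hμμ, mul_pow, hββ]
    norm_num
  have hc21 : c^2 < 1 := by
    rw [hc2, div_lt_one (by positivity)]; linarith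
  have hc1 : c < 1 := by nlinarith
  set θ := Real.arccos c with hθdef
  have hcos : Real.cos θ = c := Real.cos_arccos (by linarith) hc1.le
  have hsin : Real.sin θ = Real.sqrt (1 - c^2) := Real.sin_arccos c
  have hsinpos : 0 < Real.sin θ := by
    rw [hsin]; exact Real.sqrt_pos.2 (by linarith)
  set r := Real.sqrt (β*μ) with hrdef
  have hr : 0 < r := Real.sqrt_pos.2 (by positivity)
  have hr2 : r^2 = β*μ := Real.sq_sqrt (by positivity)
  have hrsqrt : r = Real.sqrt β * Real.sqrt μ := Real.sqrt_mul hβ.le μ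
  have hrc : 2*(r*Real.cos θ) = (1+β)*μ := by
    rw [hcos, hcdef, hrsqrt]
    field_simp
    linear_combination hμμ
  have hrs : 0 < r*Real.sin θ := mul_pos hr hsinpos
  obtain ⟨γ, hγr⟩ : ∃ g : ℝ, g * (r*Real.sin θ) = (1+β)*μ/2 - β :=
    ⟨((1+β)*μ/2 - β)/(r*Real.sin θ), by field_simp⟩
  have hD : (r*Real.sin θ)^2 = β*μ - (1+β)^2*μ^2/4 := by
    rw [mul_pow, hr2, hsin, Real.sq_sqrt (by linarith : (0:ℝ) ≤ 1 - c^2), hc2]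
    field_simp
  have key : ∀ t : ℕ, u t = r^t * (Real.cos (t*θ) + γ * Real.sin (t*θ)) * u 0 := by
    have main : ∀ t : ℕ, u t = r^t * (Real.cos (t*θ) + γ * Real.sin (t*θ)) * u 0 ∧
        u (t+1) = r^(t+1) * (Real.cos ((t+1:ℕ)*θ) + γ * Real.sin ((t+1:ℕ)*θ)) * u 0 := by
      intro t
      induction t with
      | zero =>
        constructor
        · simp
        · push_cast
          simp only [pow_one, one_mul]
          rw [h1]
          have hrc' : r*Real.cos θ = (1+β)*μ/2 := by linarith
          linear_combination -u 0 * hrc' - u 0 * hγr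
      | succ t ih =>
        obtain ⟨ih0, ih1⟩ := ih
        refine ⟨ih1, ?_⟩
        have hrec' := hrec t
        rw [ih0, ih1] at hrec'
        rw [hrec']
        push_cast
        rw [show ((t:ℝ)+1+1)*θ = (t:ℝ)*θ + 2*θ by ring,
            show ((t:ℝ)+1)*θ = (t:ℝ)*θ + θ by ring,
            cos_two_step, sin_two_step]
        linear_combination -(r^(t+1)*(Real.cos ((t:ℝ)*θ+θ)+γ*Real.sin ((t:ℝ)*θ+θ))*u 0) * hrc
          + (r^t*(Real.cos ((t:ℝ)*θ)+γ*Real.sin ((t:ℝ)*θ))*u 0) * hr2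
    exact fun t => (main t).1
  intro t
  have hγ2 : γ^2 = ((1+β)*μ/2 - β)^2 / (β*μ - (1+β)^2*μ^2/4) := by
    rw [← hD, ← hγr, eq_div_iff (pow_ne_zero _ hrs.ne')]; ring
  have hb : (Real.cos ((t:ℝ)*θ) + γ*Real.sin ((t:ℝ)*θ))^2 ≤ 1 + γ^2 := by
    nlinarith [Real.sin_sq_add_cos_sq ((t:ℝ)*θ),
      sq_nonneg (γ*Real.cos ((t:ℝ)*θ) - Real.sin ((t:ℝ)*θ))]
  have hpow : (r^t)^2 = (β*μ)^t := by
    rw [← pow_mul, mul_comm t 2, pow_mul, hr2]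
  have hu := key t
  have : u t ^2 = (β*μ)^t * (Real.cos ((t:ℝ)*θ) + γ*Real.sin ((t:ℝ)*θ))^2 * u 0^2 := by
    rw [hu, ← hpow]; ring
  have hp0 : (0:ℝ) ≤ (β*μ)^t := by positivity
  rw [this, ← hγ2]
  calc (β*μ)^t * (Real.cos ((t:ℝ)*θ) + γ*Real.sin ((t:ℝ)*θ))^2 * u 0^2
      = (β*μ)^t * ((Real.cos ((t:ℝ)*θ) + γ*Real.sin ((t:ℝ)*θ))^2 * u 0^2) := by ring
    _ ≤ (β*μ)^t * ((1 + γ^2) * u 0^2) :=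
        mul_le_mul_of_nonneg_left (mul_le_mul_of_nonneg_right hb (sq_nonneg _)) hp0
    _ = (β*μ)^t * (1 + γ^2) * u 0^2 := by ring

lemma beta_bounds (U β : ℝ) (hU : 1 ≤ U) (hβdef : β = 1 - 2/(9*U+1)) :
    4/5 ≤ β ∧ β < 1 := by
  have hU0 : (0:ℝ) < U := lt_of_lt_of_le one_pos hU
  have h9 : (0:ℝ) < 9*U+1 := by linarith
  have h25 : 2/(9*U+1) ≤ 1/5 := by
    rw [div_le_div_iff₀ h9 (by norm_num)]; linarith
  have h2pos : 0 < 2/(9*U+1) := by positivity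
  constructor
  · rw [hβdef]; linarith
  · rw [hβdef]; linarith

lemma alpha_bounds (U α : ℝ) (hU : 1 ≤ U) (hαdef : α = 1/(24*U^2)) :
    0 < α ∧ α ≤ 1/24 := by
  have hU0 : (0:ℝ) < U := lt_of_lt_of_le one_pos hU
  have hU2 : (1:ℝ) ≤ U^2 := by nlinarith
  constructor
  · rw [hαdef]; positivity
  · rw [hαdef, div_le_div_iff₀ (by positivity) (by norm_num)]; linarith

set_option maxHeartbeats 1000000 in
lemma lt_four_beta (U β α : ℝ) (hU : 1 ≤ U)
    (hβdef : β = 1 - 2/(9*U+1)) (hαdef : α = 1/(24*U^2)) :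
    (1+β)^2*(1-α) < 4*β := by
  have hU0 : (0:ℝ) < U := lt_of_lt_of_le one_pos hU
  have h9 : (0:ℝ) < 9*U+1 := by linarith
  have hP : (1+β)*(9*U+1) = 18*U := by rw [hβdef]; field_simp; ring
  have hQ : (1-β)*(9*U+1) = 2 := by rw [hβdef]; field_simp; ring
  have hb24 : α*(24*U^2) = 1 := by rw [hαdef]; field_simp
  have hp2 : (1+β)^2*(9*U+1)^2 = 324*U^2 := by
    linear_combination ((1+β)*(9*U+1) + 18*U)*hP
  have hq2 : (1-β)^2*(9*U+1)^2 = 4 := by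
    linear_combination ((1-β)*(9*U+1) + 2)*hQ
  have h9sq : (0:ℝ) < (9*U+1)^2 := by positivity
  have hgap : (1-β)^2 < (1+β)^2*α := by
    rw [← mul_lt_mul_iff_left₀ h9sq, hq2]
    have e1 : (1+β)^2*α*(9*U+1)^2 = 324*U^2*α := by linear_combination α*hp2
    have e2 : (324:ℝ)*U^2*α = 27/2 := by linear_combination (27/2)*hb24
    rw [e1, e2]; norm_num
  nlinarith [hgap]

set_option maxHeartbeats 1000000 in
lemma N_le_2D (U β α μ : ℝ) (hU : 1 ≤ U)
    (hβdef : β = 1 - 2/(9*U+1)) (hαdef : α = 1/(24*U^2))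
    (hhalf : 1/2 < μ) (hμ1 : μ ≤ 1 - α) (hμ4 : (1+β)^2*μ < 4*β) :
    ((1+β)*μ/2 - β)^2 ≤ 2*(β*μ - (1+β)^2*μ^2/4) := by
  have hU0 : (0:ℝ) < U := lt_of_lt_of_le one_pos hU
  have h9 : (0:ℝ) < 9*U+1 := by linarith
  obtain ⟨hβl, hβ1⟩ := beta_bounds U β hU hβdef
  obtain ⟨hαpos, hα24⟩ := alpha_bounds U α hU hαdef
  have hβ0 : 0 < β := by linarith
  have h1b : (0:ℝ) < 1+β := by linarith
  have hP : (1+β)*(9*U+1) = 18*U := by rw [hβdef]; field_simp; ring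
  have hQ : (1-β)*(9*U+1) = 2 := by rw [hβdef]; field_simp; ring
  have hb24 : α*(24*U^2) = 1 := by rw [hαdef]; field_simp
  have hp2 : (1+β)^2*(9*U+1)^2 = 324*U^2 := by
    linear_combination ((1+β)*(9*U+1) + 18*U)*hP
  have hq2 : (1-β)^2*(9*U+1)^2 = 4 := by
    linear_combination ((1-β)*(9*U+1) + 2)*hQ
  have h9sq : (0:ℝ) < (9*U+1)^2 := by positivity
  rcases le_or_gt ((1+β)*μ/2) β with hsub|hsub
  · have hA0 : 0 ≤ 2*β - (1+β)*μ := by linarith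
    have hAub : 2*β - (1+β)*μ ≤ 1 := by
      nlinarith [mul_le_mul_of_nonneg_left hhalf.le h1b.le]
    have hfac : (1:ℝ) ≤ 2*μ*(1+β) := by
      nlinarith [mul_le_mul_of_nonneg_left hhalf.le h1b.le]
    have key : 0 ≤ (2*β - (1+β)*μ) * (2*μ*(1+β) - (2*β - (1+β)*μ)) :=
      mul_nonneg hA0 (by linarith)
    have h2 : 0 ≤ 4*β*μ*(1-β) := by
      have := mul_nonneg (mul_nonneg (by linarith : (0:ℝ) ≤ 4*β)
        (by linarith : (0:ℝ) ≤ μ)) (by linarith : (0:ℝ) ≤ 1-β)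
      linarith [this]
    nlinarith [key, h2]
  · have hA0 : 0 < (1+β)*μ - 2*β := by linarith
    have hAub : (1+β)*μ - 2*β ≤ (1-β) - (1+β)*α := by
      nlinarith [mul_le_mul_of_nonneg_left hμ1 h1b.le]
    have hKsq : ((1-β) - (1+β)*α)^2 ≤ (1+β)^2*α - (1-β)^2 := by
      rw [← mul_le_mul_iff_left₀ h9sq]
      have e0 : ((1-β) - (1+β)*α)*(9*U+1) = 2 - 18*U*α := by
        linear_combination hQ - α*hP
      have e1 : (((1-β) - (1+β)*α)^2)*(9*U+1)^2 = (2 - 18*U*α)^2 := by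
        linear_combination (((1-β) - (1+β)*α)*(9*U+1) + (2 - 18*U*α))*e0
      have e2 : ((1+β)^2*α - (1-β)^2)*(9*U+1)^2 = 324*U^2*α - 4 := by
        linear_combination α*hp2 - hq2
      rw [e1, e2]
      have e3 : (324:ℝ)*U^2*α = 27/2 := by linear_combination (27/2)*hb24
      have e4 : 18*U*α*(4*U) = 3 := by linear_combination 3*hb24
      have h18 : 0 < 18*U*α := by positivity
      have h18u : 18*U*α ≤ 3/4 := by
        have heq : 18*U*α = 3/(4*U) := by
          rw [eq_div_iff (by positivity : (4*U) ≠ 0)]; linarith [e4]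
        rw [heq, div_le_div_iff₀ (by positivity) (by norm_num)]; linarith
      rw [e3]
      nlinarith [mul_nonneg h18.le (by linarith : (0:ℝ) ≤ 3/4 - 18*U*α)]
    have hKnn : 0 ≤ (1-β) - (1+β)*α := le_trans hA0.le hAub
    have hA2 : ((1+β)*μ - 2*β)^2 ≤ ((1-β) - (1+β)*α)^2 :=
      sq_le_sq' (by linarith) hAub
    have hXge : 4*β - (1+β)^2*μ ≥ (1+β)^2*α - (1-β)^2 := by
      nlinarith [mul_le_mul_of_nonneg_left hμ1 (sq_nonneg (1+β))]
    have hfinal : ((1+β)*μ - 2*β)^2 ≤ 2*μ*(4*β - (1+β)^2*μ) := by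
      have c1 : ((1+β)*μ - 2*β)^2 ≤ (1+β)^2*α - (1-β)^2 := le_trans hA2 hKsq
      have c3 : 4*β - (1+β)^2*μ ≤ 2*μ*(4*β - (1+β)^2*μ) := by
        nlinarith [mul_nonneg (by linarith : (0:ℝ) ≤ 2*μ - 1)
          (by linarith [hμ4] : (0:ℝ) ≤ 4*β - (1+β)^2*μ)]
      linarith
    nlinarith [hfinal]


-- ===== Part2.lean =====

noncomputable section
open Finset Real

set_option maxHeartbeats 4000000 in
lemma scalar_decay (U μ : ℝ) (hU : 1 ≤ U) (hμ0 : 0 ≤ μ)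
    (hμ1 : μ ≤ 1 - 1/(24*U^2)) (u : ℕ → ℝ)
    (h1 : u 1 = ((1 + (1 - 2/(9*U+1)))*μ - (1 - 2/(9*U+1))) * u 0)
    (hrec : ∀ t, u (t+2) = (1 + (1 - 2/(9*U+1)))*μ*u (t+1) - (1 - 2/(9*U+1))*μ*u t) :
    ∀ t : ℕ, 2 ≤ t →
      u t^2 ≤ (8*(1/2:ℝ)^t + 3*((1 - 2/(9*U+1))*(1 - 1/(24*U^2)))^t) * u 0^2 := by
  have hU0 : (0:ℝ) < U := lt_of_lt_of_le one_pos hU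
  have h9 : (0:ℝ) < 9*U+1 := by linarith
  obtain ⟨β, hβdef⟩ : ∃ b:ℝ, b = 1 - 2/(9*U+1) := ⟨_, rfl⟩
  obtain ⟨α, hαdef⟩ : ∃ a:ℝ, a = 1/(24*U^2) := ⟨_, rfl⟩
  simp only [← hβdef] at h1 hrec
  simp only [← hαdef] at hμ1
  have h25 : 2/(9*U+1) ≤ 1/5 := by
    rw [div_le_div_iff₀ h9 (by norm_num)]; linarith
  have h2pos : 0 < 2/(9*U+1) := by positivity
  have hβl : 4/5 ≤ β := by rw [hβdef]; linarith
  have hβ1 : β < 1 := by rw [hβdef]; linarith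
  have hβ0 : 0 < β := by linarith
  have hU2 : (1:ℝ) ≤ U^2 := by nlinarith
  have hαpos : (0:ℝ) < α := by rw [hαdef]; positivity
  have hα24 : α ≤ 1/24 := by
    rw [hαdef, div_le_div_iff₀ (by positivity) (by norm_num)]; linarith
  have hqnn : (0:ℝ) ≤ β*(1-α) := by nlinarith
  have h4' : (1+β)^2*(1-α) < 4*β := lt_four_beta U β α hU hβdef hαdef
  intro t ht
  obtain ⟨s, rfl⟩ : ∃ s, t = s + 2 := ⟨t-2, by omega⟩
  simp only [← hβdef, ← hαdef]
  rcases hμ0.eq_or_lt with h0|hμpos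
  · have hz : u (s+2) = 0 := by rw [hrec s, ← h0]; ring
    rw [hz]
    have hrhs : (0:ℝ) ≤ (8*(1/2:ℝ)^(s+2) + 3*(β*(1 - α))^(s+2)) * u 0^2 := by positivity
    simpa using hrhs
  · have hμ4 : (1+β)^2*μ < 4*β :=
      lt_of_le_of_lt (by nlinarith [sq_nonneg (1+β)]) h4'
    have hD : 0 < β*μ - (1+β)^2*μ^2/4 := by nlinarith
    have hcf := closed_form_bound β μ hβ0 hμpos hμ4 u h1 hrec (s+2)
    have hq2' : 0 ≤ β*μ := by positivity
    rcases le_or_gt μ (1/2) with hhalf|hhalf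
    · -- small μ
      have h1b : (0:ℝ) < 1+β := by linarith
      have hx0 : 0 ≤ (1+β)*μ/2 := by positivity
      have hxb : (1+β)*μ/2 ≤ β := by nlinarith [mul_le_mul_of_nonneg_left hhalf h1b.le]
      have hN : ((1+β)*μ/2 - β)^2 ≤ β^2 := by
        nlinarith [mul_nonneg hx0 (by linarith : (0:ℝ) ≤ 2*β - (1+β)*μ/2)]
      have h4b : (0:ℝ) ≤ 4 - (1+β)^2 := by nlinarith
      have k1 : (1+β)^2*μ^2 ≤ 4*μ^2 := by nlinarith [mul_nonneg h4b (sq_nonneg μ)]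
      have k2 : μ^2 ≤ μ*(1/2) := by nlinarith [mul_le_mul_of_nonneg_left hhalf hμ0]
      have k3 : (4/5)*μ ≤ β*μ := by nlinarith [mul_le_mul_of_nonneg_right hβl hμ0]
      have hDl : (3/8)*(β*μ) ≤ β*μ - (1+β)^2*μ^2/4 := by linarith
      have hγb : ((1+β)*μ/2 - β)^2/(β*μ - (1+β)^2*μ^2/4) ≤ β^2/((3/8)*(β*μ)) :=
        div_le_div₀ (sq_nonneg β) hN (by positivity) hDl
      have hβμh : β*μ ≤ 1/2 := by nlinarith [mul_le_mul_of_nonneg_right hβ1.le hμ0]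
      have hstep : (β*μ)^(s+2) * (1 + ((1+β)*μ/2 - β)^2/(β*μ - (1+β)^2*μ^2/4))
          ≤ 8*(1/2:ℝ)^(s+2) := by
        have e1 : (β*μ)^(s+2) * (β^2/((3/8)*(β*μ))) = (8/3)*β^2*(β*μ)^(s+1) := by
          rw [pow_succ]
          field_simp
        calc (β*μ)^(s+2) * (1 + ((1+β)*μ/2 - β)^2/(β*μ - (1+β)^2*μ^2/4))
            ≤ (β*μ)^(s+2) * (1 + β^2/((3/8)*(β*μ))) := by
              apply mul_le_mul_of_nonneg_left (by linarith [hγb]) (by positivity)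
          _ = (β*μ)^(s+2) + (8/3)*β^2*(β*μ)^(s+1) := by rw [mul_add, mul_one, e1]
          _ ≤ (1/2:ℝ)^(s+2) + (8/3)*1*(1/2:ℝ)^(s+1) := by
              gcongr <;> first
                | exact hβμh
                | nlinarith [hβ0, hβ1]
          _ ≤ 8*(1/2:ℝ)^(s+2) := by
              rw [pow_succ]
              have h12 := pow_nonneg (by norm_num : (0:ℝ) ≤ 1/2) (s+1)
              nlinarith [h12]
      calc u (s+2)^2 ≤ (β*μ)^(s+2) * (1 + ((1+β)*μ/2 - β)^2/(β*μ - (1+β)^2*μ^2/4)) * u 0^2 := hcf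
        _ ≤ (8*(1/2:ℝ)^(s+2)) * u 0^2 :=
            mul_le_mul_of_nonneg_right hstep (sq_nonneg _)
        _ ≤ (8*(1/2:ℝ)^(s+2) + 3*(β*(1-α))^(s+2)) * u 0^2 := by
            have h3 : (0:ℝ) ≤ 3*(β*(1-α))^(s+2) := by positivity
            nlinarith [sq_nonneg (u 0)]
    · -- large μ : show N ≤ 2 D
      have hN2D : ((1+β)*μ/2 - β)^2 ≤ 2*(β*μ - (1+β)^2*μ^2/4) :=
        N_le_2D U β α μ hU hβdef hαdef hhalf hμ1 hμ4
      have hγ2 : ((1+β)*μ/2 - β)^2/(β*μ - (1+β)^2*μ^2/4) ≤ 2 := by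
        rw [div_le_iff₀ hD]; linarith
      have hμle : β*μ ≤ β*(1-α) := mul_le_mul_of_nonneg_left hμ1 hβ0.le
      calc u (s+2)^2 ≤ (β*μ)^(s+2) * (1 + ((1+β)*μ/2 - β)^2/(β*μ - (1+β)^2*μ^2/4)) * u 0^2 := hcf
        _ ≤ (β*(1-α))^(s+2) * 3 * u 0^2 := by
            apply mul_le_mul_of_nonneg_right _ (sq_nonneg _)
            apply mul_le_mul (pow_le_pow_left₀ hq2' hμle _) (by linarith) (by positivity)
              (by positivity)
        _ ≤ (8*(1/2:ℝ)^(s+2) + 3*(β*(1-α))^(s+2)) * u 0^2 := by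
            have h8 : (0:ℝ) ≤ 8*(1/2:ℝ)^(s+2) := by positivity
            nlinarith [sq_nonneg (u 0), mul_nonneg h8 (sq_nonneg (u 0))]

-- ===== Part3.lean =====

noncomputable section
open Finset Real

set_option maxHeartbeats 1000000 in
lemma numeric_bound (U ε : ℝ) (hU : 1 ≤ U) (hε0 : 0 < ε) (hε1 : ε < 1)
    (t : ℕ) (ht : 9 * U * Real.log (18 / ε) ≤ (t : ℝ)) :
    8*(1/2:ℝ)^t + 3*((1 - 2/(9*U+1))*(1 - 1/(24*U^2)))^t ≤ ε := by
  have hU0 : (0:ℝ) < U := lt_of_lt_of_le one_pos hU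
  have h9 : (0:ℝ) < 9*U+1 := by linarith
  obtain ⟨β, hβdef⟩ : ∃ b:ℝ, b = 1 - 2/(9*U+1) := ⟨_, rfl⟩
  obtain ⟨α, hαdef⟩ : ∃ a:ℝ, a = 1/(24*U^2) := ⟨_, rfl⟩
  simp only [← hβdef, ← hαdef]
  obtain ⟨hβl, hβ1⟩ := beta_bounds U β hU hβdef
  obtain ⟨hαpos, hα24⟩ := alpha_bounds U α hU hαdef
  have hβ0 : (0:ℝ) < β := by linarith
  have hL18 : (1:ℝ) < 18/ε := by rw [lt_div_iff₀ hε0]; linarith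
  have hL : 0 < Real.log (18/ε) := Real.log_pos hL18
  have h9L : 9*Real.log (18/ε) ≤ (t:ℝ) := by nlinarith
  have hlogval : Real.log (ε/18) = -Real.log (18/ε) := by
    rw [← Real.log_inv, inv_div]
  have hval : Real.exp (-(2*Real.log (18/ε))) = (ε/18)^2 := by
    rw [show (-(2*Real.log (18/ε))) = ((2:ℕ):ℝ)*Real.log (ε/18) by
          rw [hlogval]; push_cast; ring,
        Real.exp_nat_mul, Real.exp_log (by positivity)]
  -- Part A : (1/2)^t ≤ (ε/18)^2
  have hhalfpow : ((1:ℝ)/2)^t ≤ (ε/18)^2 := by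
    have hqt : ((1:ℝ)/2)^t = Real.exp ((t:ℝ) * Real.log (1/2)) := by
      rw [Real.exp_nat_mul, Real.exp_log (by norm_num : (0:ℝ) < 1/2)]
    have hlog2 : (2:ℝ)/3 ≤ Real.log 2 := by
      have := Real.log_two_gt_d9; linarith
    have hl12 : Real.log ((1:ℝ)/2) = -Real.log 2 := by
      rw [one_div, Real.log_inv]
    have harg : (t:ℝ) * Real.log (1/2) ≤ -(2*Real.log (18/ε)) := by
      rw [hl12]
      have k1 : 9*Real.log (18/ε)*Real.log 2 ≤ (t:ℝ)*Real.log 2 :=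
        mul_le_mul_of_nonneg_right h9L (by linarith)
      have k2 : 9*Real.log (18/ε)*(2/3) ≤ 9*Real.log (18/ε)*Real.log 2 :=
        mul_le_mul_of_nonneg_left hlog2 (by positivity)
      nlinarith
    rw [hqt, ← hval]
    exact Real.exp_le_exp.2 harg
  -- Part B : q^t ≤ (ε/18)^2
  have hq0 : (0:ℝ) < β*(1-α) := by nlinarith
  have hq1lt : β*(1-α) < 1 := by nlinarith
  have hgapq : 2 ≤ 9*U*(1 - β*(1-α)) := by
    have expand : 1 - β*(1-α) = (1-β) + β*α := by ring
    have c2 : 9*U*(1-β) = 18*U/(9*U+1) := by rw [hβdef]; field_simp; ring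
    have c3 : 18*U/(9*U+1) = 2 - 2/(9*U+1) := by field_simp; ring
    have c4 : 9*U*((4/5)*α) = 3/(10*U) := by rw [hαdef]; field_simp; ring
    have c5 : 9*U*((4/5)*α) ≤ 9*U*(β*α) := by
      apply mul_le_mul_of_nonneg_left _ (by positivity)
      exact mul_le_mul_of_nonneg_right hβl hαpos.le
    have c1 : 2/(9*U+1) ≤ 3/(10*U) := by
      rw [div_le_div_iff₀ h9 (by positivity)]; nlinarith
    nlinarith [c2, c3, c4, c5, c1]
  have h1q : 0 < 1 - β*(1-α) := by nlinarith
  have hqpow : (β*(1-α))^t ≤ (ε/18)^2 := by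
    have hqt : (β*(1-α))^t = Real.exp ((t:ℝ) * Real.log (β*(1-α))) := by
      rw [Real.exp_nat_mul, Real.exp_log hq0]
    have hlogle : Real.log (β*(1-α)) ≤ -(1 - β*(1-α)) := by
      have := Real.log_le_sub_one_of_pos hq0
      linarith
    have harg : (t:ℝ) * Real.log (β*(1-α)) ≤ -(2*Real.log (18/ε)) := by
      have k1 : (t:ℝ) * Real.log (β*(1-α)) ≤ (t:ℝ) * (-(1 - β*(1-α))) :=
        mul_le_mul_of_nonneg_left hlogle (by positivity)
      have k2 : (9*U*Real.log (18/ε)) * (1 - β*(1-α)) ≤ (t:ℝ) * (1 - β*(1-α)) :=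
        mul_le_mul_of_nonneg_right ht h1q.le
      have k3 : Real.log (18/ε) * 2 ≤ Real.log (18/ε) * (9*U*(1 - β*(1-α))) :=
        mul_le_mul_of_nonneg_left hgapq hL.le
      nlinarith [k1, k2, k3]
    rw [hqt, ← hval]
    exact Real.exp_le_exp.2 harg
  -- combine : (ε/18)^2 ≤ ε/18
  have hsq : ((ε:ℝ)/18)^2 ≤ ε/18 := by nlinarith
  nlinarith [hhalfpow, hqpow, hsq]

-- ===== Part4.lean =====

noncomputable section
open Classical Finset Real

variable {n : ℕ}

/-- glue lemma: for a minimal-length walk `p` from `a` to `b`, any bridge of length `m`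
from `p i` to `p j` forces `j ≤ i + m`. -/
lemma min_walk_glue (Ed : Fin n → Fin n → Prop)
    (p : ℕ → Fin n) (k0 : ℕ) (a b : Fin n)
    (hp0 : p 0 = a) (hpk : p k0 = b) (hpe : ∀ i < k0, Ed (p i) (p (i+1)))
    (hmin : ∀ k' < k0, ¬ ∃ q : ℕ → Fin n, q 0 = a ∧ q k' = b ∧ ∀ i < k', Ed (q i) (q (i+1)))
    (i j m : ℕ) (hj : j ≤ k0)
    (r : ℕ → Fin n) (hr0 : r 0 = p i) (hrm : r m = p j)
    (hre : ∀ x < m, Ed (r x) (r (x+1))) :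
    j ≤ i + m := by
  by_contra hcon
  push_neg at hcon
  set K := i + m + (k0 - j) with hK
  have hKlt : K < k0 := by omega
  apply hmin K hKlt
  refine ⟨fun x => if x ≤ i then p x else if x ≤ i+m then r (x-i) else p (x-(i+m)+j),
    ?_, ?_, ?_⟩
  · simp [hp0]
  · -- endpoint
    by_cases h1 : K ≤ i
    · -- then k0 - j ≤ 0 and m = 0 : K = i, j = k0
      have hm : m = 0 := by omega
      have hjk : j = k0 := by omega
      have hKi : K = i := by omega
      simp only [hKi, le_refl, if_pos]
      rw [show p i = r 0 from hr0.symm, show r 0 = r m by rw [hm], hrm, hjk, hpk]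
    · by_cases h2 : K ≤ i + m
      · -- j = k0, m ≥ 1, K = i + m
        have hjk : j = k0 := by omega
        have hKim : K = i + m := by omega
        simp only [if_neg h1, if_pos h2]
        rw [show K - i = m by omega, hrm, hjk, hpk]
      · simp only [if_neg h1, if_neg h2]
        rw [show K - (i+m) + j = k0 by omega, hpk]
  · intro x hx
    rcases lt_trichotomy x i with hxi | hxi | hxi
    · -- x < i : both first branch
      simp only [if_pos (by omega : x ≤ i), if_pos (by omega : x+1 ≤ i)]
      exact hpe x (by omega)
    · -- x = i
      subst hxi
      by_cases hm : m = 0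
      · -- next is third branch
        have hjlt : j < k0 := by omega
        simp only [if_pos (le_refl x), if_neg (by omega : ¬ x+1 ≤ x),
          if_neg (by omega : ¬ x+1 ≤ x+m)]
        rw [show x+1-(x+m)+j = j+1 by omega]
        have hpj : p x = p j := by rw [← hr0, show r 0 = r m by rw [hm], hrm]
        rw [hpj]
        exact hpe j hjlt
      · -- next is second branch
        simp only [if_pos (le_refl x), if_neg (by omega : ¬ x+1 ≤ x),
          if_pos (by omega : x+1 ≤ x+m)]
        rw [show x+1-x = 1 by omega, ← hr0]
        exact hre 0 (by omega)
    · -- x > i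
      by_cases h2 : x + 1 ≤ i + m
      · -- both second branch
        simp only [if_neg (by omega : ¬ x ≤ i), if_pos (by omega : x ≤ i+m),
          if_neg (by omega : ¬ x+1 ≤ i), if_pos h2]
        rw [show x+1-i = (x-i)+1 by omega]
        exact hre (x-i) (by omega)
      · by_cases h3 : x ≤ i + m
        · -- x = i + m, next third branch
          have hxm : x = i + m := by omega
          have hjlt : j < k0 := by omega
          simp only [if_neg (by omega : ¬ x ≤ i), if_pos h3,
            if_neg (by omega : ¬ x+1 ≤ i), if_neg h2]
          rw [show x - i = m by omega, hrm, show x+1-(i+m)+j = j+1 by omega]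
          exact hpe j hjlt
        · -- both third branch
          simp only [if_neg (by omega : ¬ x ≤ i), if_neg h3,
            if_neg (by omega : ¬ x+1 ≤ i), if_neg (by omega : ¬ x+1 ≤ i+m)]
          rw [show x+1-(i+m)+j = (x-(i+m)+j)+1 by omega]
          exact hpe _ (by omega)

lemma exists_walk (Ed : Fin n → Fin n → Prop) (a b : Fin n)
    (hconn : Relation.ReflTransGen Ed a b) :
    ∃ k : ℕ, ∃ q : ℕ → Fin n, q 0 = a ∧ q k = b ∧ ∀ i < k, Ed (q i) (q (i+1)) := by
  induction hconn with
  | refl => exact ⟨0, fun _ => a, rfl, rfl, by omega⟩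
  | @tail c dd hac hcd ih =>
    obtain ⟨k, q, hq0, hqk, hqe⟩ := ih
    refine ⟨k+1, fun x => if x ≤ k then q x else dd, by simp [hq0], by simp, ?_⟩
    intro x hx
    by_cases h1 : x + 1 ≤ k
    · simp only [if_pos (by omega : x ≤ k), if_pos h1]
      exact hqe x (by omega)
    · have hxk : x = k := by omega
      subst hxk
      simp only [if_pos (le_refl x), if_neg (by omega : ¬ x+1 ≤ x), hqk]
      exact hcd

lemma exists_min_walk (Ed : Fin n → Fin n → Prop)
    (hsymm : ∀ i j, Ed i j → Ed j i)
    (hconn : ∀ i j, Relation.ReflTransGen Ed i j) (a b : Fin n) :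
    ∃ (k0 : ℕ) (p : ℕ → Fin n), p 0 = a ∧ p k0 = b ∧ (∀ i < k0, Ed (p i) (p (i+1))) ∧
      (∀ x y, x ≤ k0 → y ≤ k0 → p x = p y → x = y) ∧
      (∀ x y w, x ≤ k0 → y ≤ k0 → Ed (p x) w → Ed (p y) w → y ≤ x + 2) := by
  have hP : ∃ k : ℕ, ∃ q : ℕ → Fin n, q 0 = a ∧ q k = b ∧ ∀ i < k, Ed (q i) (q (i+1)) :=
    exists_walk Ed a b (hconn a b)
  classical
  obtain ⟨p, hp0, hpk, hpe⟩ := Nat.find_spec hP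
  set k0 := Nat.find hP with hk0
  have hmin : ∀ k' < k0, ¬ ∃ q : ℕ → Fin n, q 0 = a ∧ q k' = b ∧
      ∀ i < k', Ed (q i) (q (i+1)) := fun k' hk' => Nat.find_min hP hk'
  refine ⟨k0, p, hp0, hpk, hpe, ?_, ?_⟩
  · intro x y hx hy hxy
    have h1 : y ≤ x + 0 → x ≤ y + 0 → x = y := by omega
    rcases le_or_gt x y with h | h
    · have := min_walk_glue Ed p k0 a b hp0 hpk hpe hmin x y 0 hy
        (fun _ => p x) rfl hxy (by omega)
      omega
    · have := min_walk_glue Ed p k0 a b hp0 hpk hpe hmin y x 0 hx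
        (fun _ => p y) rfl hxy.symm (by omega)
      omega
  · intro x y w hx hy hxw hyw
    have := min_walk_glue Ed p k0 a b hp0 hpk hpe hmin x y 2 hy
      (fun z => if z = 0 then p x else if z = 1 then w else p y)
      (by simp) (by norm_num) ?_
    · omega
    · intro z hz
      interval_cases z
      · simpa using hxw
      · simpa using hsymm _ _ hyw

lemma neighborhood_card (Ed : Fin n → Fin n → Prop) (hrefl : ∀ i, Ed i i)
    (d : Fin n → ℕ) (hd : ∀ i, d i = (Finset.univ.filter fun j => j ≠ i ∧ Ed i j).card)
    (z : Fin n) :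
    (Finset.univ.filter fun j => Ed z j).card = d z + 1 := by
  have hins : (Finset.univ.filter fun j => Ed z j)
      = insert z (Finset.univ.filter fun j => j ≠ z ∧ Ed z j) := by
    ext j
    simp only [Finset.mem_filter, Finset.mem_univ, true_and, Finset.mem_insert]
    constructor
    · intro hEd
      by_cases hj : j = z
      · exact Or.inl hj
      · exact Or.inr ⟨hj, hEd⟩
    · rintro (rfl | ⟨_, hEd⟩)
      · exact hrefl j
      · exact hEd
  rw [hins, Finset.card_insert_of_notMem (by simp), hd]

lemma path_degree_sum (Ed : Fin n → Fin n → Prop) (hrefl : ∀ i, Ed i i)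
    (d : Fin n → ℕ) (hd : ∀ i, d i = (Finset.univ.filter fun j => j ≠ i ∧ Ed i j).card)
    (p : ℕ → Fin n) (k0 : ℕ)
    (hnb : ∀ x y w, x ≤ k0 → y ≤ k0 → Ed (p x) w → Ed (p y) w → y ≤ x + 2) :
    ∑ x ∈ Finset.range (k0+1), (d (p x) + 1) ≤ 3*n := by
  classical
  set N : Fin n → Finset (Fin n) := fun z => Finset.univ.filter (fun j => Ed z j) with hN
  have hclass : ∀ r : ℕ, ∑ x ∈ (Finset.range (k0+1)).filter (fun x => x % 3 = r),
      (d (p x) + 1) ≤ n := by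
    intro r
    have hdisj : ∀ x ∈ (Finset.range (k0+1)).filter (fun x => x % 3 = r),
        ∀ y ∈ (Finset.range (k0+1)).filter (fun x => x % 3 = r), x ≠ y →
        Disjoint (N (p x)) (N (p y)) := by
      intro x hx y hy hxy
      simp only [Finset.mem_filter, Finset.mem_range] at hx hy
      rw [Finset.disjoint_left]
      intro w hw1 hw2
      simp only [hN, Finset.mem_filter, Finset.mem_univ, true_and] at hw1 hw2
      have h1 := hnb x y w (by omega) (by omega) hw1 hw2
      have h2 := hnb y x w (by omega) (by omega) hw2 hw1
      omega
    have hsum : ∑ x ∈ (Finset.range (k0+1)).filter (fun x => x % 3 = r),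
        (d (p x) + 1) = ∑ x ∈ (Finset.range (k0+1)).filter (fun x => x % 3 = r),
        (N (p x)).card := by
      apply Finset.sum_congr rfl
      intro x _
      rw [neighborhood_card Ed hrefl d hd (p x)]
    rw [hsum, ← Finset.card_biUnion hdisj]
    calc (((Finset.range (k0+1)).filter (fun x => x % 3 = r)).biUnion
          (fun x => N (p x))).card ≤ (Finset.univ : Finset (Fin n)).card :=
        Finset.card_le_card (Finset.subset_univ _)
      _ = n := by simp
  have hsplit : ∑ x ∈ Finset.range (k0+1), (d (p x) + 1)
      = ∑ x ∈ (Finset.range (k0+1)).filter (fun x => x % 3 = 0), (d (p x) + 1)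
      + (∑ x ∈ (Finset.range (k0+1)).filter (fun x => x % 3 = 1), (d (p x) + 1)
      + ∑ x ∈ (Finset.range (k0+1)).filter (fun x => x % 3 = 2), (d (p x) + 1)) := by
    rw [← Finset.sum_filter_add_sum_filter_not (Finset.range (k0+1))
      (fun x => x % 3 = 0)]
    congr 1
    rw [← Finset.sum_filter_add_sum_filter_not
      ((Finset.range (k0+1)).filter (fun x => ¬ x % 3 = 0)) (fun x => x % 3 = 1)]
    congr 1
    · apply Finset.sum_congr _ (fun _ _ => rfl)
      rw [Finset.filter_filter]
      apply Finset.filter_congr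
      intro x _
      constructor
      · intro h; exact h.2
      · intro h; exact ⟨by omega, h⟩
    · apply Finset.sum_congr _ (fun _ _ => rfl)
      rw [Finset.filter_filter]
      apply Finset.filter_congr
      intro x _
      constructor
      · intro h; omega
      · intro h; omega
  rw [hsplit]
  have h0 := hclass 0
  have h1 := hclass 1
  have h2 := hclass 2
  omega

set_option maxHeartbeats 1000000 in
lemma dirichlet_gap (hn : 0 < n) (Ed : Fin n → Fin n → Prop)
    (hsymm : ∀ i j, Ed i j → Ed j i) (hrefl : ∀ i, Ed i i)
    (hconn : ∀ i j, Relation.ReflTransGen Ed i j)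
    (d : Fin n → ℕ)
    (hd : ∀ i, d i = (Finset.univ.filter fun j => j ≠ i ∧ Ed i j).card)
    (v : Fin n → ℝ) (hsum : ∑ i, v i = 0) :
    ∑ i, (v i)^2 ≤ 12*(n:ℝ)^2 *
      ∑ i, ∑ j ∈ Finset.univ.filter (fun j => j ≠ i ∧ Ed i j),
        (v j - v i)^2 / (2*(max (d i) (d j) : ℝ)) := by
  classical
  have hinst : Nonempty (Fin n) := ⟨⟨0, hn⟩⟩
  have hne : (Finset.univ : Finset (Fin n)).Nonempty := Finset.univ_nonempty
  set DD := ∑ i, ∑ j ∈ Finset.univ.filter (fun j => j ≠ i ∧ Ed i j),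
      (v j - v i)^2 / (2*(max (d i) (d j) : ℝ)) with hDDdef
  have hDD0 : 0 ≤ DD := by
    apply Finset.sum_nonneg
    intro i _
    apply Finset.sum_nonneg
    intro j _
    positivity
  obtain ⟨a, _, hmax⟩ := Finset.exists_max_image Finset.univ v hne
  obtain ⟨b, _, hmin⟩ := Finset.exists_min_image Finset.univ v hne
  have hminle : v b ≤ 0 := by
    by_contra h
    push_neg at h
    have : 0 < ∑ i, v i :=
      Finset.sum_pos (fun i _ => lt_of_lt_of_le h (hmin i (Finset.mem_univ i))) hne
    rw [hsum] at this
    exact lt_irrefl _ this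
  have hmaxge : 0 ≤ v a := by
    by_contra h
    push_neg at h
    have : 0 < ∑ i, -v i :=
      Finset.sum_pos (fun i _ => by
        have := hmax i (Finset.mem_univ i); linarith) hne
    rw [Finset.sum_neg_distrib, hsum] at this
    norm_num at this
  have hsq : ∀ i, (v i)^2 ≤ (v a - v b)^2 := by
    intro i
    have h1 := hmax i (Finset.mem_univ i)
    have h2 := hmin i (Finset.mem_univ i)
    rcases le_or_gt 0 (v i) with h | h
    · nlinarith
    · nlinarith
  have hsumsq : ∑ i, (v i)^2 ≤ (n:ℝ) * (v a - v b)^2 := by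
    calc ∑ i, (v i)^2 ≤ ∑ _i : Fin n, (v a - v b)^2 :=
        Finset.sum_le_sum (fun i _ => hsq i)
      _ = (n:ℝ) * (v a - v b)^2 := by
        rw [Finset.sum_const, Finset.card_univ, Fintype.card_fin, nsmul_eq_mul]
  obtain ⟨k0, p, hp0, hpk, hpe, hinj, hnb⟩ := exists_min_walk Ed hsymm hconn a b
  rcases Nat.eq_zero_or_pos k0 with hk00 | hk01
  · -- a = b, so v is constant zero
    have hab : a = b := by rw [← hp0, ← hpk, hk00]
    have hva : v a - v b = 0 := by rw [hab]; ring
    have : ∑ i, (v i)^2 ≤ 0 := by rw [hva] at hsumsq; simpa using hsumsq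
    exact le_trans this (by positivity)
  · -- main case
    have hconsec : ∀ x, x < k0 → p (x+1) ≠ p x := by
      intro x hx hcontra
      have := hinj x (x+1) (by omega) (by omega) hcontra.symm
      omega
    have hdpos : ∀ x, x < k0 → 1 ≤ d (p x) := by
      intro x hx
      rw [hd]
      apply Finset.card_pos.2
      exact ⟨p (x+1), Finset.mem_filter.2 ⟨Finset.mem_univ _, hconsec x hx, hpe x hx⟩⟩
    have hApos : ∀ x, x < k0 → (0:ℝ) < 2*(max (d (p x)) (d (p (x+1))) : ℝ) := by
      intro x hx
      have := hdpos x hx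
      have hm : 1 ≤ max (d (p x)) (d (p (x+1))) := le_trans this (le_max_left _ _)
      have : (1:ℝ) ≤ (max (d (p x)) (d (p (x+1))) : ℝ) := by exact_mod_cast hm
      linarith
    -- telescoping
    have htel : ∑ x ∈ Finset.range k0, (v (p (x+1)) - v (p x)) = v b - v a := by
      rw [Finset.sum_range_sub (fun x => v (p x)), hpk, hp0]
    -- Cauchy-Schwarz
    have hCS : (v b - v a)^2 ≤ (∑ x ∈ Finset.range k0, 2*(max (d (p x)) (d (p (x+1))) : ℝ))
        * (∑ x ∈ Finset.range k0,
            (v (p (x+1)) - v (p x))^2 / (2*(max (d (p x)) (d (p (x+1))) : ℝ))) := by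
      have := Finset.sum_mul_sq_le_sq_mul_sq (Finset.range k0)
        (fun x => Real.sqrt (2*(max (d (p x)) (d (p (x+1))) : ℝ)))
        (fun x => (v (p (x+1)) - v (p x)) / Real.sqrt (2*(max (d (p x)) (d (p (x+1))) : ℝ)))
      have e1 : ∑ x ∈ Finset.range k0,
          (Real.sqrt (2*(max (d (p x)) (d (p (x+1))) : ℝ)) *
            ((v (p (x+1)) - v (p x)) / Real.sqrt (2*(max (d (p x)) (d (p (x+1))) : ℝ))))
          = ∑ x ∈ Finset.range k0, (v (p (x+1)) - v (p x)) := by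
        apply Finset.sum_congr rfl
        intro x hx
        rw [Finset.mem_range] at hx
        have hA := hApos x hx
        have hs : Real.sqrt (2*(max (d (p x)) (d (p (x+1))) : ℝ)) ≠ 0 :=
          Real.sqrt_ne_zero'.2 hA
        rw [mul_comm, div_mul_cancel₀ _ hs]
      have e2 : ∑ x ∈ Finset.range k0,
          (Real.sqrt (2*(max (d (p x)) (d (p (x+1))) : ℝ)))^2
          = ∑ x ∈ Finset.range k0, 2*(max (d (p x)) (d (p (x+1))) : ℝ) := by
        apply Finset.sum_congr rfl
        intro x hx
        rw [Finset.mem_range] at hx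
        exact Real.sq_sqrt (hApos x hx).le
      have e3 : ∑ x ∈ Finset.range k0,
          ((v (p (x+1)) - v (p x)) / Real.sqrt (2*(max (d (p x)) (d (p (x+1))) : ℝ)))^2
          = ∑ x ∈ Finset.range k0,
            (v (p (x+1)) - v (p x))^2 / (2*(max (d (p x)) (d (p (x+1))) : ℝ)) := by
        apply Finset.sum_congr rfl
        intro x hx
        rw [Finset.mem_range] at hx
        rw [div_pow, Real.sq_sqrt (hApos x hx).le]
      rw [e1, e2, e3, htel] at this
      exact this
    -- path sum is at most the full Dirichlet double sum
    have hpath : ∑ x ∈ Finset.range k0,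
        (v (p (x+1)) - v (p x))^2 / (2*(max (d (p x)) (d (p (x+1))) : ℝ)) ≤ DD := by
      set g : Fin n × Fin n → ℝ :=
        fun q => (v q.2 - v q.1)^2 / (2*(max (d q.1) (d q.2) : ℝ)) with hgdef
      have hginj : ∀ x ∈ Finset.range k0, ∀ y ∈ Finset.range k0,
          (p x, p (x+1)) = (p y, p (y+1)) → x = y := by
        intro x hx y hy hxy
        rw [Finset.mem_range] at hx hy
        have := congrArg Prod.fst hxy
        exact hinj x y (by omega) (by omega) this
      have himg : ∑ x ∈ Finset.range k0,
          (v (p (x+1)) - v (p x))^2 / (2*(max (d (p x)) (d (p (x+1))) : ℝ))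
          = ∑ q ∈ (Finset.range k0).image (fun x => (p x, p (x+1))), g q := by
        rw [Finset.sum_image hginj]
      have hsub : (Finset.range k0).image (fun x => (p x, p (x+1)))
          ⊆ (Finset.univ ×ˢ Finset.univ).filter (fun q => q.2 ≠ q.1 ∧ Ed q.1 q.2) := by
        intro q hq
        rw [Finset.mem_image] at hq
        obtain ⟨x, hx, rfl⟩ := hq
        rw [Finset.mem_range] at hx
        refine Finset.mem_filter.2 ⟨by simp, hconsec x hx, hpe x hx⟩
      have hTg : ∑ q ∈ (Finset.univ ×ˢ Finset.univ).filter
          (fun q => q.2 ≠ q.1 ∧ Ed q.1 q.2), g q = DD := by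
        rw [Finset.sum_filter, Finset.sum_product, hDDdef]
        apply Finset.sum_congr rfl
        intro i _
        rw [Finset.sum_filter]
      rw [himg, ← hTg]
      apply Finset.sum_le_sum_of_subset_of_nonneg hsub
      intro q _ _
      rw [hgdef]
      positivity
    -- sum of the weights along the path is at most 12 n
    have hAsum : ∑ x ∈ Finset.range k0, 2*(max (d (p x)) (d (p (x+1))) : ℝ)
        ≤ 12*(n:ℝ) := by
      have hdeg := path_degree_sum Ed hrefl d hd p k0 hnb
      have hS : ∑ x ∈ Finset.range (k0+1), d (p x) + (k0+1) ≤ 3*n := by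
        have : ∑ x ∈ Finset.range (k0+1), (d (p x) + 1)
            = ∑ x ∈ Finset.range (k0+1), d (p x) + (k0+1) := by
          rw [Finset.sum_add_distrib, Finset.sum_const, Finset.card_range, smul_eq_mul,
            mul_one]
        omega
      have h1 : ∑ x ∈ Finset.range k0, d (p x) ≤ ∑ x ∈ Finset.range (k0+1), d (p x) := by
        rw [Finset.sum_range_succ]
        omega
      have h2 : ∑ x ∈ Finset.range k0, d (p (x+1))
          ≤ ∑ x ∈ Finset.range (k0+1), d (p x) := by
        rw [Finset.sum_range_succ' (fun x => d (p x)) k0]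
        omega
      have hnatbound : ∑ x ∈ Finset.range k0, 2*(max (d (p x)) (d (p (x+1))))
          ≤ 12*n := by
        have hle : ∑ x ∈ Finset.range k0, 2*(max (d (p x)) (d (p (x+1))))
            ≤ ∑ x ∈ Finset.range k0, 2*(d (p x) + d (p (x+1))) := by
          apply Finset.sum_le_sum
          intro x _
          have := max_le_add_of_nonneg (Nat.zero_le (d (p x))) (Nat.zero_le (d (p (x+1))))
          omega
        have hexp : ∑ x ∈ Finset.range k0, 2*(d (p x) + d (p (x+1)))
            = 2*(∑ x ∈ Finset.range k0, d (p x)) + 2*(∑ x ∈ Finset.range k0, d (p (x+1))) := by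
          rw [← Finset.mul_sum, Finset.sum_add_distrib, Nat.mul_add]
        omega
      calc ∑ x ∈ Finset.range k0, 2*(max (d (p x)) (d (p (x+1))) : ℝ)
          = ((∑ x ∈ Finset.range k0, 2*(max (d (p x)) (d (p (x+1)))) : ℕ) : ℝ) := by
            push_cast [Nat.cast_max]
            rfl
        _ ≤ ((12*n : ℕ) : ℝ) := by exact_mod_cast hnatbound
        _ = 12*(n:ℝ) := by push_cast; ring
    -- combine everything
    have hpathnn : 0 ≤ ∑ x ∈ Finset.range k0,
        (v (p (x+1)) - v (p x))^2 / (2*(max (d (p x)) (d (p (x+1))) : ℝ)) := by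
      apply Finset.sum_nonneg
      intro x _
      positivity
    have hmid : (v a - v b)^2 ≤ 12*(n:ℝ) * DD := by
      have h12 : (0:ℝ) ≤ 12*(n:ℝ) := by positivity
      have := mul_le_mul hAsum hpath hpathnn h12
      have hsq2 : (v a - v b)^2 = (v b - v a)^2 := by ring
      rw [hsq2]
      exact le_trans hCS this
    calc ∑ i, (v i)^2 ≤ (n:ℝ) * (v a - v b)^2 := hsumsq
      _ ≤ (n:ℝ) * (12*(n:ℝ) * DD) :=
          mul_le_mul_of_nonneg_left hmid (by positivity)
      _ = 12*(n:ℝ)^2 * DD := by ring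

-- ===== Part5.lean =====

noncomputable section
open Classical Finset Real

variable {n : ℕ}

/-- the lazy Metropolis averaging map -/
def Wapp (Ed : Fin n → Fin n → Prop) (d : Fin n → ℕ) (z : Fin n → ℝ) (i : Fin n) : ℝ :=
  z i + ∑ j ∈ Finset.univ.filter (fun j => j ≠ i ∧ Ed i j),
    (z j - z i) / (2*(max (d i) (d j) : ℝ))

variable (Ed : Fin n → Fin n → Prop) (d : Fin n → ℕ)

lemma edge_sum_swap (hsymm : ∀ i j, Ed i j → Ed j i) (f : Fin n → Fin n → ℝ) :
    ∑ i, ∑ j ∈ Finset.univ.filter (fun j => j ≠ i ∧ Ed i j), f i j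
    = ∑ i, ∑ j ∈ Finset.univ.filter (fun j => j ≠ i ∧ Ed i j), f j i := by
  have h1 : ∀ (g : Fin n → Fin n → ℝ),
      ∑ i, ∑ j ∈ Finset.univ.filter (fun j => j ≠ i ∧ Ed i j), g i j
      = ∑ i, ∑ j, if j ≠ i ∧ Ed i j then g i j else 0 := by
    intro g
    apply Finset.sum_congr rfl
    intro i _
    rw [Finset.sum_filter]
  rw [h1, h1, Finset.sum_comm]
  apply Finset.sum_congr rfl
  intro i _
  apply Finset.sum_congr rfl
  intro j _
  by_cases h : j ≠ i ∧ Ed i j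
  · rw [if_pos h, if_pos ⟨Ne.symm h.1, hsymm _ _ h.2⟩]
  · rw [if_neg h, if_neg (by
      intro hc
      exact h ⟨Ne.symm hc.1, hsymm _ _ hc.2⟩)]

lemma Wapp_sum_preserved (hsymm : ∀ i j, Ed i j → Ed j i) (z : Fin n → ℝ) :
    ∑ i, Wapp Ed d z i = ∑ i, z i := by
  unfold Wapp
  rw [Finset.sum_add_distrib]
  have hswap := edge_sum_swap Ed hsymm
    (fun i j => (z j - z i) / (2*(max (d i) (d j) : ℝ)))
  have hneg : ∑ i, ∑ j ∈ Finset.univ.filter (fun j => j ≠ i ∧ Ed i j),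
      (z i - z j) / (2*(max (d j) (d i) : ℝ))
      = - ∑ i, ∑ j ∈ Finset.univ.filter (fun j => j ≠ i ∧ Ed i j),
        (z j - z i) / (2*(max (d i) (d j) : ℝ)) := by
    rw [← Finset.sum_neg_distrib]
    apply Finset.sum_congr rfl
    intro i _
    rw [← Finset.sum_neg_distrib]
    apply Finset.sum_congr rfl
    intro j _
    rw [max_comm ((d j : ℕ) : ℝ) ((d i : ℕ) : ℝ)]
    ring
  have hzero : ∑ i, ∑ j ∈ Finset.univ.filter (fun j => j ≠ i ∧ Ed i j),
      (z j - z i) / (2*(max (d i) (d j) : ℝ)) = 0 := by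
    have := hswap
    rw [hneg] at this
    linarith
  rw [hzero]
  ring

lemma Wapp_symm (hsymm : ∀ i j, Ed i j → Ed j i) (u z : Fin n → ℝ) :
    ∑ i, u i * Wapp Ed d z i = ∑ i, z i * Wapp Ed d u i := by
  unfold Wapp
  have expand : ∀ (u z : Fin n → ℝ), ∑ i, u i * (z i + ∑ j ∈ Finset.univ.filter
      (fun j => j ≠ i ∧ Ed i j), (z j - z i) / (2*(max (d i) (d j) : ℝ)))
      = ∑ i, u i * z i
      + (∑ i, ∑ j ∈ Finset.univ.filter (fun j => j ≠ i ∧ Ed i j),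
          (u i * z j) / (2*(max (d i) (d j) : ℝ))
        - ∑ i, ∑ j ∈ Finset.univ.filter (fun j => j ≠ i ∧ Ed i j),
          (u i * z i) / (2*(max (d i) (d j) : ℝ))) := by
    intro u z
    rw [← Finset.sum_sub_distrib, ← Finset.sum_add_distrib]
    apply Finset.sum_congr rfl
    intro i _
    rw [mul_add, Finset.mul_sum, ← Finset.sum_sub_distrib]
    congr 1
    apply Finset.sum_congr rfl
    intro j _
    ring
  rw [expand, expand]
  have swap1 := edge_sum_swap Ed hsymm
    (fun i j => (u i * z j) / (2*(max (d i) (d j) : ℝ)))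
  have e1 : ∑ i, ∑ j ∈ Finset.univ.filter (fun j => j ≠ i ∧ Ed i j),
      (u j * z i) / (2*(max (d j) (d i) : ℝ))
      = ∑ i, ∑ j ∈ Finset.univ.filter (fun j => j ≠ i ∧ Ed i j),
        (z i * u j) / (2*(max (d i) (d j) : ℝ)) := by
    apply Finset.sum_congr rfl; intro i _
    apply Finset.sum_congr rfl; intro j _
    rw [max_comm ((d j : ℕ) : ℝ) ((d i : ℕ) : ℝ)]; ring
  have e2 : ∑ i, ∑ j ∈ Finset.univ.filter (fun j => j ≠ i ∧ Ed i j),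
      (u i * z i) / (2*(max (d i) (d j) : ℝ))
      = ∑ i, ∑ j ∈ Finset.univ.filter (fun j => j ≠ i ∧ Ed i j),
        (z i * u i) / (2*(max (d i) (d j) : ℝ)) := by
    apply Finset.sum_congr rfl; intro i _
    apply Finset.sum_congr rfl; intro j _
    ring
  have e3 : ∑ i, u i * z i = ∑ i, z i * u i := by
    apply Finset.sum_congr rfl; intro i _; ring
  rw [swap1, e1, e2, e3]

/-- Dirichlet identity : `∑ z·Wz = ∑ z² - DD/2`. -/
lemma Wapp_dirichlet (hsymm : ∀ i j, Ed i j → Ed j i) (z : Fin n → ℝ) :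
    ∑ i, z i * Wapp Ed d z i
    = ∑ i, (z i)^2 - (1/2) * ∑ i, ∑ j ∈ Finset.univ.filter (fun j => j ≠ i ∧ Ed i j),
        (z j - z i)^2 / (2*(max (d i) (d j) : ℝ)) := by
  have hS2 := edge_sum_swap Ed hsymm
    (fun i j => (z j)^2 / (2*(max (d i) (d j) : ℝ)))
  have hswapfix : ∑ i, ∑ j ∈ Finset.univ.filter (fun j => j ≠ i ∧ Ed i j),
      (z i)^2 / (2*(max (d j) (d i) : ℝ))
      = ∑ i, ∑ j ∈ Finset.univ.filter (fun j => j ≠ i ∧ Ed i j),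
        (z i)^2 / (2*(max (d i) (d j) : ℝ)) := by
    apply Finset.sum_congr rfl; intro i _
    apply Finset.sum_congr rfl; intro j _
    rw [max_comm ((d j : ℕ) : ℝ) ((d i : ℕ) : ℝ)]
  rw [hswapfix] at hS2
  -- expand LHS
  have hL : ∑ i, z i * Wapp Ed d z i
      = ∑ i, (z i)^2
      + (∑ i, ∑ j ∈ Finset.univ.filter (fun j => j ≠ i ∧ Ed i j),
          (z i * z j) / (2*(max (d i) (d j) : ℝ))
        - ∑ i, ∑ j ∈ Finset.univ.filter (fun j => j ≠ i ∧ Ed i j),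
          (z i)^2 / (2*(max (d i) (d j) : ℝ))) := by
    unfold Wapp
    rw [← Finset.sum_sub_distrib, ← Finset.sum_add_distrib]
    apply Finset.sum_congr rfl
    intro i _
    rw [mul_add, Finset.mul_sum, ← Finset.sum_sub_distrib]
    congr 1
    · ring
    apply Finset.sum_congr rfl
    intro j _
    ring
  -- expand DD
  have hDD : ∑ i, ∑ j ∈ Finset.univ.filter (fun j => j ≠ i ∧ Ed i j),
      (z j - z i)^2 / (2*(max (d i) (d j) : ℝ))
      = (∑ i, ∑ j ∈ Finset.univ.filter (fun j => j ≠ i ∧ Ed i j),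
          (z j)^2 / (2*(max (d i) (d j) : ℝ))
        + ∑ i, ∑ j ∈ Finset.univ.filter (fun j => j ≠ i ∧ Ed i j),
          (z i)^2 / (2*(max (d i) (d j) : ℝ)))
      - 2 * ∑ i, ∑ j ∈ Finset.univ.filter (fun j => j ≠ i ∧ Ed i j),
          (z i * z j) / (2*(max (d i) (d j) : ℝ)) := by
    rw [Finset.mul_sum, ← Finset.sum_add_distrib, ← Finset.sum_sub_distrib]
    apply Finset.sum_congr rfl
    intro i _
    rw [Finset.mul_sum, ← Finset.sum_add_distrib, ← Finset.sum_sub_distrib]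
    apply Finset.sum_congr rfl
    intro j _
    ring
  rw [hL, hDD, hS2]
  ring

/-- the row sums of the off-diagonal weights are at most 1/2. -/
lemma Wapp_rowsum (hd : ∀ i, d i = (Finset.univ.filter fun j => j ≠ i ∧ Ed i j).card)
    (i : Fin n) :
    ∑ j ∈ Finset.univ.filter (fun j => j ≠ i ∧ Ed i j),
      (1:ℝ) / (2*(max (d i) (d j) : ℝ)) ≤ 1/2 := by
  rcases Nat.eq_zero_or_pos (d i) with h0 | hpos
  · have hempty : (Finset.univ.filter fun j => j ≠ i ∧ Ed i j) = ∅ := by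
      rw [← Finset.card_eq_zero, ← hd]; exact h0
    rw [hempty]
    norm_num
  · have hterm : ∀ j ∈ Finset.univ.filter (fun j => j ≠ i ∧ Ed i j),
        (1:ℝ) / (2*(max (d i) (d j) : ℝ)) ≤ 1/(2*(d i : ℝ)) := by
      intro j _
      apply div_le_div_of_nonneg_left (by norm_num) (by positivity)
      have : (d i : ℝ) ≤ max ((d i : ℕ) : ℝ) ((d j : ℕ) : ℝ) := le_max_left _ _
      linarith
    calc ∑ j ∈ Finset.univ.filter (fun j => j ≠ i ∧ Ed i j),
          (1:ℝ) / (2*(max (d i) (d j) : ℝ))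
        ≤ ∑ _j ∈ Finset.univ.filter (fun j => j ≠ i ∧ Ed i j), 1/(2*(d i : ℝ)) :=
          Finset.sum_le_sum hterm
      _ = ((Finset.univ.filter fun j => j ≠ i ∧ Ed i j).card : ℝ) * (1/(2*(d i : ℝ))) := by
          rw [Finset.sum_const, nsmul_eq_mul]
      _ = (d i : ℝ) * (1/(2*(d i : ℝ))) := by rw [← hd]
      _ = 1/2 := by
          have : (d i : ℝ) ≠ 0 := by
            simp only [ne_eq, Nat.cast_eq_zero]
            omega
          field_simp

/-- positive semidefiniteness : `0 ≤ ∑ z·Wz`. -/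
lemma Wapp_psd (hsymm : ∀ i j, Ed i j → Ed j i)
    (hd : ∀ i, d i = (Finset.univ.filter fun j => j ≠ i ∧ Ed i j).card)
    (z : Fin n → ℝ) :
    0 ≤ ∑ i, z i * Wapp Ed d z i := by
  -- ∑ zWz = ∑ z² + SP/2 - 2 S2 where SP = ∑∑ (zi+zj)²w ≥ 0 and S2 ≤ ∑ z²/2
  have hSP := edge_sum_swap Ed hsymm
    (fun i j => (z j)^2 / (2*(max (d i) (d j) : ℝ)))
  have hswapfix : ∑ i, ∑ j ∈ Finset.univ.filter (fun j => j ≠ i ∧ Ed i j),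
      (z i)^2 / (2*(max (d j) (d i) : ℝ))
      = ∑ i, ∑ j ∈ Finset.univ.filter (fun j => j ≠ i ∧ Ed i j),
        (z i)^2 / (2*(max (d i) (d j) : ℝ)) := by
    apply Finset.sum_congr rfl; intro i _
    apply Finset.sum_congr rfl; intro j _
    rw [max_comm ((d j : ℕ) : ℝ) ((d i : ℕ) : ℝ)]
  rw [hswapfix] at hSP
  -- expansion of the plus-form sum
  have hplus : ∑ i, ∑ j ∈ Finset.univ.filter (fun j => j ≠ i ∧ Ed i j),
      (z j + z i)^2 / (2*(max (d i) (d j) : ℝ))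
      = (∑ i, ∑ j ∈ Finset.univ.filter (fun j => j ≠ i ∧ Ed i j),
          (z j)^2 / (2*(max (d i) (d j) : ℝ))
        + ∑ i, ∑ j ∈ Finset.univ.filter (fun j => j ≠ i ∧ Ed i j),
          (z i)^2 / (2*(max (d i) (d j) : ℝ)))
      + 2 * ∑ i, ∑ j ∈ Finset.univ.filter (fun j => j ≠ i ∧ Ed i j),
          (z i * z j) / (2*(max (d i) (d j) : ℝ)) := by
    rw [Finset.mul_sum, ← Finset.sum_add_distrib, ← Finset.sum_add_distrib]
    apply Finset.sum_congr rfl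
    intro i _
    rw [Finset.mul_sum, ← Finset.sum_add_distrib, ← Finset.sum_add_distrib]
    apply Finset.sum_congr rfl
    intro j _
    ring
  have hplusnn : 0 ≤ ∑ i, ∑ j ∈ Finset.univ.filter (fun j => j ≠ i ∧ Ed i j),
      (z j + z i)^2 / (2*(max (d i) (d j) : ℝ)) := by
    apply Finset.sum_nonneg; intro i _
    apply Finset.sum_nonneg; intro j _
    positivity
  have hS2le : ∑ i, ∑ j ∈ Finset.univ.filter (fun j => j ≠ i ∧ Ed i j),
      (z i)^2 / (2*(max (d i) (d j) : ℝ)) ≤ (1/2) * ∑ i, (z i)^2 := by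
    rw [Finset.mul_sum]
    apply Finset.sum_le_sum
    intro i _
    have hfac : ∑ j ∈ Finset.univ.filter (fun j => j ≠ i ∧ Ed i j),
        (z i)^2 / (2*(max (d i) (d j) : ℝ))
        = (z i)^2 * ∑ j ∈ Finset.univ.filter (fun j => j ≠ i ∧ Ed i j),
          (1:ℝ) / (2*(max (d i) (d j) : ℝ)) := by
      rw [Finset.mul_sum]
      apply Finset.sum_congr rfl
      intro j _
      ring
    rw [hfac]
    calc (z i)^2 * ∑ j ∈ Finset.univ.filter (fun j => j ≠ i ∧ Ed i j),
          (1:ℝ) / (2*(max (d i) (d j) : ℝ))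
        ≤ (z i)^2 * (1/2) :=
          mul_le_mul_of_nonneg_left (Wapp_rowsum Ed d hd i) (sq_nonneg _)
      _ = 1/2 * (z i)^2 := by ring
  have hL : ∑ i, z i * Wapp Ed d z i
      = ∑ i, (z i)^2
      + (∑ i, ∑ j ∈ Finset.univ.filter (fun j => j ≠ i ∧ Ed i j),
          (z i * z j) / (2*(max (d i) (d j) : ℝ))
        - ∑ i, ∑ j ∈ Finset.univ.filter (fun j => j ≠ i ∧ Ed i j),
          (z i)^2 / (2*(max (d i) (d j) : ℝ))) := by
    unfold Wapp
    rw [← Finset.sum_sub_distrib, ← Finset.sum_add_distrib]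
    apply Finset.sum_congr rfl
    intro i _
    rw [mul_add, Finset.mul_sum, ← Finset.sum_sub_distrib]
    congr 1
    · ring
    apply Finset.sum_congr rfl
    intro j _
    ring
  rw [hL]
  -- from hplus : SX = (SP - SJ - S2)/2 = (SP - 2 S2)/2 using hSP
  linarith [hplusnn, hS2le, hplus, hSP]

/-- the spectral-gap quadratic form bound on mean-zero vectors. -/
lemma Wapp_gap (hn : 0 < n)
    (hsymm : ∀ i j, Ed i j → Ed j i) (hrefl : ∀ i, Ed i i)
    (hconn : ∀ i j, Relation.ReflTransGen Ed i j)
    (hd : ∀ i, d i = (Finset.univ.filter fun j => j ≠ i ∧ Ed i j).card)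
    (U : ℝ) (hU : (n:ℝ) ≤ U)
    (z : Fin n → ℝ) (hz : ∑ i, z i = 0) :
    ∑ i, z i * Wapp Ed d z i ≤ (1 - 1/(24*U^2)) * ∑ i, (z i)^2 := by
  have hgap := dirichlet_gap hn Ed hsymm hrefl hconn d hd z hz
  have hid := Wapp_dirichlet Ed d hsymm z
  have hn1 : (1:ℝ) ≤ (n:ℝ) := by exact_mod_cast hn
  have hU1 : (1:ℝ) ≤ U := le_trans hn1 hU
  have hU0 : (0:ℝ) < U := by linarith
  have ha : (1/(24*U^2)) * (24*U^2) = 1 := by field_simp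
  have ha0 : (0:ℝ) ≤ 1/(24*U^2) := by positivity
  have hz2 : (0:ℝ) ≤ ∑ i, (z i)^2 := Finset.sum_nonneg (fun i _ => sq_nonneg _)
  have hDD0 : (0:ℝ) ≤ ∑ i, ∑ j ∈ Finset.univ.filter (fun j => j ≠ i ∧ Ed i j),
      (z j - z i)^2 / (2*(max (d i) (d j) : ℝ)) := by
    apply Finset.sum_nonneg; intro i _
    apply Finset.sum_nonneg; intro j _
    positivity
  -- a * ∑z² ≤ a * 12 n² DD ≤ (1/2) DD
  have hk1 : (1/(24*U^2)) * ∑ i, (z i)^2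
      ≤ (1/(24*U^2)) * (12*(n:ℝ)^2 * ∑ i, ∑ j ∈ Finset.univ.filter
        (fun j => j ≠ i ∧ Ed i j), (z j - z i)^2 / (2*(max (d i) (d j) : ℝ))) :=
    mul_le_mul_of_nonneg_left hgap ha0
  have hn2U : (n:ℝ)^2 ≤ U^2 := by nlinarith
  have hk2 : (1/(24*U^2)) * (12*(n:ℝ)^2) ≤ 1/2 := by
    have : (1/(24*U^2)) * (12*(n:ℝ)^2) ≤ (1/(24*U^2)) * (12*U^2) :=
      mul_le_mul_of_nonneg_left (by linarith) ha0
    calc (1/(24*U^2)) * (12*(n:ℝ)^2) ≤ (1/(24*U^2)) * (12*U^2) := this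
      _ = 1/2 := by field_simp; ring
  have hk3 : (1/(24*U^2)) * (12*(n:ℝ)^2 * ∑ i, ∑ j ∈ Finset.univ.filter
        (fun j => j ≠ i ∧ Ed i j), (z j - z i)^2 / (2*(max (d i) (d j) : ℝ)))
      ≤ (1/2) * ∑ i, ∑ j ∈ Finset.univ.filter
        (fun j => j ≠ i ∧ Ed i j), (z j - z i)^2 / (2*(max (d i) (d j) : ℝ)) := by
    rw [← mul_assoc]
    exact mul_le_mul_of_nonneg_right hk2 hDD0
  nlinarith [hk1, hk3, hid]

-- ===== Part6.lean =====

noncomputable section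
open Classical Finset Real

variable {n : ℕ}

lemma Wapp_shift (Ed : Fin n → Fin n → Prop) (d : Fin n → ℕ)
    (w : Fin n → ℝ) (c : ℝ) (i : Fin n) :
    Wapp Ed d (fun j => w j + c) i = Wapp Ed d w i + c := by
  unfold Wapp
  have : ∑ j ∈ Finset.univ.filter (fun j => j ≠ i ∧ Ed i j),
      ((w j + c) - (w i + c)) / (2*(max (d i) (d j) : ℝ))
      = ∑ j ∈ Finset.univ.filter (fun j => j ≠ i ∧ Ed i j),
      (w j - w i) / (2*(max (d i) (d j) : ℝ)) := by
    apply Finset.sum_congr rfl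
    intro j _
    ring_nf
  rw [this]
  ring

def Tlin (Ed : Fin n → Fin n → Prop) (d : Fin n → ℕ) :
    EuclideanSpace ℝ (Fin n) →ₗ[ℝ] EuclideanSpace ℝ (Fin n) where
  toFun z := WithLp.toLp 2 (fun i => Wapp Ed d z i - (∑ j, z j)/n)
  map_add' x y := by
    ext i
    have hpt : ∀ j, (x + y) j = x j + y j := fun j => rfl
    have hW : Wapp Ed d (x + y) i = Wapp Ed d x i + Wapp Ed d y i := by
      unfold Wapp
      simp only [hpt, Pi.add_apply]
      have : ∑ j ∈ Finset.univ.filter (fun j => j ≠ i ∧ Ed i j),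
          ((x + y) j - (x i + y i)) / (2*(max (d i) (d j) : ℝ))
          = ∑ j ∈ Finset.univ.filter (fun j => j ≠ i ∧ Ed i j),
          ((x j - x i) / (2*(max (d i) (d j) : ℝ))
            + (y j - y i) / (2*(max (d i) (d j) : ℝ))) := by
        apply Finset.sum_congr rfl
        intro j _
        simp only [hpt]
        ring
      simp only [hpt] at this
      rw [this, Finset.sum_add_distrib]
      ring
    have hs : ∑ j, (x + y) j = ∑ j, x j + ∑ j, y j := by
      rw [← Finset.sum_add_distrib]
      apply Finset.sum_congr rfl
      intro j _
      exact hpt j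
    show Wapp Ed d (x + y) i - (∑ j, (x + y) j)/n
        = (Wapp Ed d x i - (∑ j, x j)/n) + (Wapp Ed d y i - (∑ j, y j)/n)
    rw [hW, hs]
    ring
  map_smul' c x := by
    ext i
    have hpt : ∀ j, (c • x) j = c * x j := fun j => rfl
    have hW : Wapp Ed d (c • x) i = c * Wapp Ed d x i := by
      unfold Wapp
      simp only [hpt, Pi.smul_apply, smul_eq_mul]
      have : ∑ j ∈ Finset.univ.filter (fun j => j ≠ i ∧ Ed i j),
          ((c • x) j - c * x i) / (2*(max (d i) (d j) : ℝ))
          = ∑ j ∈ Finset.univ.filter (fun j => j ≠ i ∧ Ed i j),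
          (c * ((x j - x i) / (2*(max (d i) (d j) : ℝ)))) := by
        apply Finset.sum_congr rfl
        intro j _
        simp only [hpt]
        ring
      simp only [hpt] at this
      rw [this, ← Finset.mul_sum]
      ring
    have hs : ∑ j, (c • x) j = c * ∑ j, x j := by
      rw [Finset.mul_sum]
      apply Finset.sum_congr rfl
      intro j _
      exact hpt j
    show Wapp Ed d (c • x) i - (∑ j, (c • x) j)/n
        = c * (Wapp Ed d x i - (∑ j, x j)/n)
    rw [hW, hs]
    ring

lemma Tlin_apply (Ed : Fin n → Fin n → Prop) (d : Fin n → ℕ)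
    (z : EuclideanSpace ℝ (Fin n)) (i : Fin n) :
    Tlin Ed d z i = Wapp Ed d z i - (∑ j, z j)/n := rfl

lemma inner_eq_sum (x y : EuclideanSpace ℝ (Fin n)) :
    (inner ℝ x y : ℝ) = ∑ i, x i * y i := by
  rw [PiLp.inner_apply]
  apply Finset.sum_congr rfl
  intro i _
  simp [RCLike.inner_apply, conj_trivial]
  ring

lemma Tlin_symm (Ed : Fin n → Fin n → Prop) (d : Fin n → ℕ)
    (hsymm : ∀ i j, Ed i j → Ed j i) :
    LinearMap.IsSymmetric (Tlin Ed d : EuclideanSpace ℝ (Fin n) →ₗ[ℝ]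
      EuclideanSpace ℝ (Fin n)) := by
  intro x y
  rw [inner_eq_sum, inner_eq_sum]
  simp only [Tlin_apply]
  have e1 : ∑ i, (Wapp Ed d x i - (∑ j, x j)/n) * y i
      = ∑ i, y i * Wapp Ed d x i - ((∑ j, x j)/n) * ∑ i, y i := by
    rw [Finset.mul_sum, ← Finset.sum_sub_distrib]
    apply Finset.sum_congr rfl
    intro i _
    ring
  have e2 : ∑ i, x i * (Wapp Ed d y i - (∑ j, y j)/n)
      = ∑ i, x i * Wapp Ed d y i - ((∑ j, y j)/n) * ∑ i, x i := by
    rw [Finset.mul_sum, ← Finset.sum_sub_distrib]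
    apply Finset.sum_congr rfl
    intro i _
    ring
  rw [e1, e2, Wapp_symm Ed d hsymm y x]
  ring

set_option maxHeartbeats 1000000 in
lemma Tlin_bounds (hn : 0 < n) (Ed : Fin n → Fin n → Prop)
    (hsymm : ∀ i j, Ed i j → Ed j i) (hrefl : ∀ i, Ed i i)
    (hconn : ∀ i j, Relation.ReflTransGen Ed i j)
    (d : Fin n → ℕ)
    (hd : ∀ i, d i = (Finset.univ.filter fun j => j ≠ i ∧ Ed i j).card)
    (U : ℝ) (hU : (n:ℝ) ≤ U)
    (z : EuclideanSpace ℝ (Fin n)) :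
    0 ≤ (inner ℝ z (Tlin Ed d z) : ℝ) ∧
    (inner ℝ z (Tlin Ed d z) : ℝ) ≤ (1 - 1/(24*U^2)) * ∑ i, (z i)^2 := by
  have hn0 : ((n:ℝ)) ≠ 0 := by
    simp only [ne_eq, Nat.cast_eq_zero]
    omega
  set c : ℝ := (∑ j, z j)/n with hc
  set u : Fin n → ℝ := fun i => z i - c with hu
  have hzi : ∀ i, z i = u i + c := by intro i; rw [hu]; ring
  have husum : ∑ i, u i = 0 := by
    rw [hu]
    rw [Finset.sum_sub_distrib, Finset.sum_const, Finset.card_univ, Fintype.card_fin,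
      nsmul_eq_mul, hc]
    field_simp
    ring
  have hWz : ∀ i, Wapp Ed d z i = Wapp Ed d u i + c := by
    intro i
    have : Wapp Ed d z i = Wapp Ed d (fun j => u j + c) i := by
      congr 1
      funext j
      rw [hzi j]
    rw [this, Wapp_shift]
  have hTz : ∀ i, Tlin Ed d z i = Wapp Ed d u i := by
    intro i
    rw [Tlin_apply, hWz i, ← hc]
    ring
  have hinner : (inner ℝ z (Tlin Ed d z) : ℝ) = ∑ i, u i * Wapp Ed d u i := by
    rw [inner_eq_sum]
    have e : ∑ i, z i * Tlin Ed d z i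
        = ∑ i, u i * Wapp Ed d u i + c * ∑ i, Wapp Ed d u i := by
      rw [Finset.mul_sum, ← Finset.sum_add_distrib]
      apply Finset.sum_congr rfl
      intro i _
      rw [hTz i, hzi i]
      ring
    rw [e, Wapp_sum_preserved Ed d hsymm u, husum]
    ring
  have hstep : ∑ i, (u i)^2 ≤ ∑ i, (z i)^2 := by
    have e : ∑ i, (u i)^2 = ∑ i, (z i)^2 - 2*c*(∑ i, z i) + (n:ℝ)*c^2 := by
      have : ∀ i, (u i)^2 = (z i)^2 - 2*c*z i + c^2 := by
        intro i; rw [hu]; ring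
      rw [Finset.sum_congr rfl (fun i _ => this i), Finset.sum_add_distrib,
        Finset.sum_sub_distrib, Finset.sum_const, Finset.card_univ, Fintype.card_fin,
        nsmul_eq_mul, Finset.mul_sum]
    have hzc : ∑ i, z i = (n:ℝ)*c := by
      rw [hc]; field_simp
    rw [e, hzc]
    have hnn : (0:ℝ) ≤ (n:ℝ) := by positivity
    nlinarith [sq_nonneg c, mul_nonneg hnn (sq_nonneg c)]
  constructor
  · rw [hinner]
    exact Wapp_psd Ed d hsymm hd u
  · rw [hinner]
    have hgap := Wapp_gap Ed d hn hsymm hrefl hconn hd U hU u husum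
    have hα : (0:ℝ) ≤ 1 - 1/(24*U^2) := by
      have hn1 : (1:ℝ) ≤ (n:ℝ) := by exact_mod_cast hn
      have hU1 : (1:ℝ) ≤ U := le_trans hn1 hU
      have : 1/(24*U^2) ≤ 1/24 := by
        rw [div_le_div_iff₀ (by positivity) (by norm_num)]
        nlinarith
      linarith
    calc ∑ i, u i * Wapp Ed d u i ≤ (1 - 1/(24*U^2)) * ∑ i, (u i)^2 := hgap
      _ ≤ (1 - 1/(24*U^2)) * ∑ i, (z i)^2 := mul_le_mul_of_nonneg_left hstep hα

set_option maxHeartbeats 1000000 in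
lemma consensus_core (hn : 0 < n) (Ed : Fin n → Fin n → Prop)
    (hsymm : ∀ i j, Ed i j → Ed j i) (hrefl : ∀ i, Ed i i)
    (hconn : ∀ i j, Relation.ReflTransGen Ed i j)
    (d : Fin n → ℕ)
    (hd : ∀ i, d i = (Finset.univ.filter fun j => j ≠ i ∧ Ed i j).card)
    (U : ℝ) (hU : (n:ℝ) ≤ U)
    (v : ℕ → EuclideanSpace ℝ (Fin n))
    (hsum0 : ∑ i, v 0 i = 0)
    (hv1 : ∀ i, v 1 i = (1 + (1 - 2/(9*U+1)))*Wapp Ed d (v 0) i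
      - (1 - 2/(9*U+1))*(v 0 i))
    (hvrec : ∀ t i, v (t+2) i = (1 + (1 - 2/(9*U+1)))*Wapp Ed d (v (t+1)) i
      - (1 - 2/(9*U+1))*Wapp Ed d (v t) i) :
    ∀ t : ℕ, 2 ≤ t → ∑ i, (v t i)^2 ≤
      (8*(1/2:ℝ)^t + 3*((1 - 2/(9*U+1))*(1 - 1/(24*U^2)))^t) * ∑ i, (v 0 i)^2 := by
  have hn1 : (1:ℝ) ≤ (n:ℝ) := by exact_mod_cast hn
  have hU1 : (1:ℝ) ≤ U := le_trans hn1 hU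
  have hn0 : ((n:ℝ)) ≠ 0 := by linarith
  -- mean-zero preserved
  have hsumt : ∀ t, ∑ i, v t i = 0 ∧ ∑ i, v (t+1) i = 0 := by
    intro t
    induction t with
    | zero =>
      refine ⟨hsum0, ?_⟩
      have : ∑ i, v 1 i = (1 + (1 - 2/(9*U+1)))*(∑ i, Wapp Ed d (v 0) i)
          - (1 - 2/(9*U+1))*(∑ i, v 0 i) := by
        rw [Finset.mul_sum, Finset.mul_sum, ← Finset.sum_sub_distrib]
        exact Finset.sum_congr rfl (fun i _ => hv1 i)
      rw [this, Wapp_sum_preserved Ed d hsymm, hsum0]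
      ring
    | succ t ih =>
      refine ⟨ih.2, ?_⟩
      have : ∑ i, v (t+2) i = (1 + (1 - 2/(9*U+1)))*(∑ i, Wapp Ed d (v (t+1)) i)
          - (1 - 2/(9*U+1))*(∑ i, Wapp Ed d (v t) i) := by
        rw [Finset.mul_sum, Finset.mul_sum, ← Finset.sum_sub_distrib]
        exact Finset.sum_congr rfl (fun i _ => hvrec t i)
      rw [this, Wapp_sum_preserved Ed d hsymm, Wapp_sum_preserved Ed d hsymm,
        ih.1, ih.2]
      ring
  -- vector recurrences
  have hv1v : v 1 = (1 + (1 - 2/(9*U+1))) • (Tlin Ed d (v 0))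
      - (1 - 2/(9*U+1)) • (v 0) := by
    ext i
    simp only [PiLp.sub_apply, PiLp.smul_apply, smul_eq_mul]
    rw [hv1 i, Tlin_apply, hsum0]
    ring
  have hvrecv : ∀ t, v (t+2) = (1 + (1 - 2/(9*U+1))) • (Tlin Ed d (v (t+1)))
      - (1 - 2/(9*U+1)) • (Tlin Ed d (v t)) := by
    intro t
    ext i
    simp only [PiLp.sub_apply, PiLp.smul_apply, smul_eq_mul]
    rw [hvrec t i, Tlin_apply, Tlin_apply, (hsumt t).1, (hsumt t).2]
    ring
  -- eigendecomposition
  have hTsym := Tlin_symm Ed d hsymm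
  have hrank : Module.finrank ℝ (EuclideanSpace ℝ (Fin n)) = n :=
    finrank_euclideanSpace_fin
  set b := hTsym.eigenvectorBasis hrank with hbdef
  set μ := hTsym.eigenvalues hrank with hμdef
  have happly : ∀ k, Tlin Ed d (b k) = μ k • b k := by
    intro k
    have := hTsym.apply_eigenvectorBasis hrank k
    exact_mod_cast this
  have hbnorm : ∀ k, (inner ℝ (b k) (b k) : ℝ) = 1 := by
    intro k
    rw [real_inner_self_eq_norm_sq, b.orthonormal.1 k]
    norm_num
  have hinnerT : ∀ k (z : EuclideanSpace ℝ (Fin n)),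
      (inner ℝ (b k) (Tlin Ed d z) : ℝ) = μ k * (inner ℝ (b k) z : ℝ) := by
    intro k z
    rw [← hTsym (b k) z, happly k, real_inner_smul_left]
  have hμbounds : ∀ k, 0 ≤ μ k ∧ μ k ≤ 1 - 1/(24*U^2) := by
    intro k
    have hb := Tlin_bounds hn Ed hsymm hrefl hconn d hd U hU (b k)
    have e1 : (inner ℝ (b k) (Tlin Ed d (b k)) : ℝ) = μ k := by
      rw [happly k, real_inner_smul_right, hbnorm k]
      ring
    have e2 : ∑ i, ((b k) i)^2 = 1 := by
      rw [← hbnorm k, inner_eq_sum]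
      exact Finset.sum_congr rfl (fun i _ => sq ((b k) i))
    rw [e1, e2] at hb
    constructor
    · exact hb.1
    · calc μ k ≤ (1 - 1/(24*U^2)) * 1 := hb.2
        _ = 1 - 1/(24*U^2) := by ring
  -- per-coordinate decay
  have hdecay : ∀ k, ∀ t : ℕ, 2 ≤ t →
      (inner ℝ (b k) (v t) : ℝ)^2 ≤ (8*(1/2:ℝ)^t
        + 3*((1 - 2/(9*U+1))*(1 - 1/(24*U^2)))^t) * (inner ℝ (b k) (v 0) : ℝ)^2 := by
    intro k
    apply scalar_decay U (μ k) hU1 (hμbounds k).1 (hμbounds k).2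
      (fun t => (inner ℝ (b k) (v t) : ℝ))
    · rw [hv1v, inner_sub_right, real_inner_smul_right, real_inner_smul_right,
        hinnerT k]
      ring
    · intro t
      rw [hvrecv t, inner_sub_right, real_inner_smul_right, real_inner_smul_right,
        hinnerT k, hinnerT k]
      ring
  -- Parseval
  have hpars : ∀ z : EuclideanSpace ℝ (Fin n),
      ∑ i, (z i)^2 = ∑ k, (inner ℝ (b k) z : ℝ)^2 := by
    intro z
    have h1 : ∑ i, (z i)^2 = (inner ℝ z z : ℝ) := by
      rw [inner_eq_sum]
      exact Finset.sum_congr rfl (fun i _ => sq (z i))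
    have h2 := b.sum_inner_mul_inner z z
    rw [h1, ← h2]
    apply Finset.sum_congr rfl
    intro k _
    rw [real_inner_comm z (b k), sq]
  intro t ht
  rw [hpars (v t), hpars (v 0), Finset.mul_sum]
  exact Finset.sum_le_sum (fun k _ => hdecay k t ht)

-- ===== Main.lean =====

noncomputable section

open Classical in
/-- The accelerated (linear-time) consensus iteration with `U ≥ n`:
for every `ε ∈ (0,1)`, after `t ≥ 9U ln(18/ε)` steps the squared error
`E(t) = ‖x(t) - x̄ 1‖₂²` has shrunk by a factor of `ε`. -/
theorem accelerated_consensus_convergence_time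
    (n : ℕ) (hn : 0 < n)
    (E : Fin n → Fin n → Prop)
    (hE_symm : ∀ i j, E i j → E j i)
    (hE_refl : ∀ i, E i i)
    (hE_conn : ∀ i j, Relation.ReflTransGen E i j)
    (d : Fin n → ℕ)
    (hd : ∀ i, d i = (Finset.univ.filter fun j => j ≠ i ∧ E i j).card)
    (U : ℝ) (hU : (n : ℝ) ≤ U)
    (x y : ℕ → Fin n → ℝ)
    (hy0 : y 0 = x 0)
    (hy : ∀ t i, y (t + 1) i = x t i +
      ∑ j ∈ Finset.univ.filter (fun j => j ≠ i ∧ E i j),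
        (x t j - x t i) / (2 * (max (d i) (d j) : ℝ)))
    (hx : ∀ t i, x (t + 1) i =
      y (t + 1) i + (1 - 2 / (9 * U + 1)) * (y (t + 1) i - y t i))
    (xbar : ℝ) (hxbar : xbar = (∑ j, x 0 j) / n)
    (Esq : ℕ → ℝ) (hEsq : ∀ t, Esq t = ∑ i, (x t i - xbar) ^ 2) :
    ∀ ε : ℝ, 0 < ε → ε < 1 →
      ∀ t : ℕ, 9 * U * Real.log (18 / ε) ≤ (t : ℝ) →
        Esq t ≤ ε * Esq 0 := by
  intro ε hε0 hε1 t ht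
  have hn1 : (1:ℝ) ≤ (n:ℝ) := by exact_mod_cast hn
  have hU1 : (1:ℝ) ≤ U := le_trans hn1 hU
  have hn0 : ((n:ℝ)) ≠ 0 := by linarith
  -- t ≥ 2
  have hL18pos : (0:ℝ) < 18/ε := by positivity
  have hlog18 : (2:ℝ) ≤ Real.log 18 := by
    have hexp2 : Real.exp 2 ≤ 18 := by
      have he : Real.exp 2 = Real.exp 1 * Real.exp 1 := by
        rw [← Real.exp_add]; norm_num
      have h1 := Real.exp_one_lt_d9
      have h2 := Real.exp_pos 1
      nlinarith
    rw [Real.le_log_iff_exp_le (by norm_num : (0:ℝ) < 18)]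
    exact hexp2
  have hmono : Real.log 18 ≤ Real.log (18/ε) := by
    apply Real.log_le_log (by norm_num)
    rw [le_div_iff₀ hε0]
    nlinarith
  have hLge : (2:ℝ) ≤ Real.log (18/ε) := le_trans hlog18 hmono
  have ht2 : 2 ≤ t := by
    have h9UL : (18:ℝ) ≤ 9 * U * Real.log (18/ε) := by
      nlinarith
    have : (2:ℝ) ≤ (t:ℝ) := by linarith
    exact_mod_cast this
  -- the centered sequence
  set v : ℕ → EuclideanSpace ℝ (Fin n) := fun s => WithLp.toLp 2 (fun i => x s i - xbar) with hvdef
  have hvpt : ∀ s i, v s i = x s i - xbar := fun s i => rfl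
  have hsum0 : ∑ i, v 0 i = 0 := by
    have : ∑ i, v 0 i = ∑ i, x 0 i - (n:ℝ)*xbar := by
      rw [Finset.sum_sub_distrib, Finset.sum_const, Finset.card_univ, Fintype.card_fin,
        nsmul_eq_mul]
    rw [this, hxbar]
    field_simp
    ring
  -- y in terms of Wapp
  have hyW : ∀ s i, y (s+1) i = Wapp E d (x s) i := by
    intro s i
    exact hy s i
  -- Wapp shift between x and v
  have hshift : ∀ s i, Wapp E d (x s) i = Wapp E d (v s) i + xbar := by
    intro s i
    have hxs : (x s) = (fun j => v s j + xbar) := by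
      funext j
      rw [hvpt]
      ring
    rw [hxs, Wapp_shift]
  -- recurrences for v
  have hv1 : ∀ i, v 1 i = (1 + (1 - 2/(9*U+1)))*Wapp E d (v 0) i
      - (1 - 2/(9*U+1))*(v 0 i) := by
    intro i
    have hx1 : x 1 i = y 1 i + (1 - 2/(9*U+1))*(y 1 i - y 0 i) := hx 0 i
    have hy1 : y 1 i = Wapp E d (x 0) i := hyW 0 i
    have hy0i : y 0 i = x 0 i := by rw [hy0]
    rw [hvpt, hx1, hy1, hy0i, hshift 0 i]
    have : x 0 i = v 0 i + xbar := by rw [hvpt]; ring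
    rw [this]
    ring
  have hvrec : ∀ s i, v (s+2) i = (1 + (1 - 2/(9*U+1)))*Wapp E d (v (s+1)) i
      - (1 - 2/(9*U+1))*Wapp E d (v s) i := by
    intro s i
    have hxs : x (s+2) i = y (s+2) i + (1 - 2/(9*U+1))*(y (s+2) i - y (s+1) i) :=
      hx (s+1) i
    have hy2 : y (s+2) i = Wapp E d (x (s+1)) i := hyW (s+1) i
    have hy1 : y (s+1) i = Wapp E d (x s) i := hyW s i
    rw [hvpt, hxs, hy2, hy1, hshift (s+1) i, hshift s i]
    ring
  -- core decay estimate
  have hcore := consensus_core hn E hE_symm hE_refl hE_conn d hd U hU v hsum0 hv1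
    hvrec t ht2
  -- numeric bound
  have hnum := numeric_bound U ε hU1 hε0 hε1 t ht
  -- put together
  have hEt : Esq t = ∑ i, (v t i)^2 := by
    rw [hEsq t]
  have hE0 : Esq 0 = ∑ i, (v 0 i)^2 := by
    rw [hEsq 0]
  have hE0nn : 0 ≤ ∑ i, (v 0 i)^2 := Finset.sum_nonneg (fun i _ => sq_nonneg _)
  rw [hEt, hE0]
  calc ∑ i, (v t i)^2
      ≤ (8*(1/2:ℝ)^t + 3*((1 - 2/(9*U+1))*(1 - 1/(24*U^2)))^t) * ∑ i, (v 0 i)^2 :=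
        hcore
    _ ≤ ε * ∑ i, (v 0 i)^2 := mul_le_mul_of_nonneg_right hnum hE0nn
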